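/- For C = 2 and ρ₁ < 2 < ρ₂, the function 2Φ(z) = ρ₂(ρ₂−2)z² + 2(ρ₁ρ₂−ρ₁−1)z + ρ₁² has two roots on (0,∞) if and only if ρ₁ < ρ₂ − 1 − √(ρ₂(ρ₂−2)). -/

import Mathlib

open Real Set

set_option maxHeartbeats 1000000 in
theorem stmt_7 (ρ₁ ρ₂ : ℝ) (hρ₁ : 0 < ρ₁) (h12 : ρ₁ < 2) (h2 : 2 < ρ₂)
    (P : ℝ → ℝ)
    (hP : ∀ z : ℝ, P z = ρ₂ * (ρ₂ - 2) * z ^ 2 + 2 * (ρ₁ * ρ₂ - ρ₁ - 1) * z + ρ₁ ^ 2) :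
    (∃ z₁ z₂ : ℝ, 0 < z₁ ∧ 0 < z₂ ∧ z₁ ≠ z₂ ∧ P z₁ = 0 ∧ P z₂ = 0) ↔
      ρ₁ < ρ₂ - 1 - Real.sqrt (ρ₂ * (ρ₂ - 2)) := by
  have ha : 0 < ρ₂ * (ρ₂ - 2) := by nlinarith
  set s : ℝ := Real.sqrt (ρ₂ * (ρ₂ - 2)) with hs
  have hs0 : 0 ≤ s := Real.sqrt_nonneg _
  have hs2 : s ^ 2 = ρ₂ * (ρ₂ - 2) := Real.sq_sqrt ha.le
  clear_value s
  constructor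
  · rintro ⟨z₁, z₂, hz₁, hz₂, hne, he₁, he₂⟩
    rw [hP] at he₁ he₂
    have hd : z₁ - z₂ ≠ 0 := sub_ne_zero.mpr hne
    have hfac : (ρ₂ * (ρ₂ - 2) * (z₁ + z₂) + 2 * (ρ₁ * ρ₂ - ρ₁ - 1)) * (z₁ - z₂) = 0 := by
      linear_combination he₁ - he₂
    have hsum : ρ₂ * (ρ₂ - 2) * (z₁ + z₂) + 2 * (ρ₁ * ρ₂ - ρ₁ - 1) = 0 :=
      (mul_eq_zero.mp hfac).resolve_right hd
    have hprod : ρ₁ ^ 2 = ρ₂ * (ρ₂ - 2) * (z₁ * z₂) := by nlinarith [he₁, hsum]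
    have hb : ρ₁ * (ρ₂ - 1) - 1 < 0 := by nlinarith [add_pos hz₁ hz₂]
    have hρlt : ρ₁ < ρ₂ - 1 := by nlinarith
    have hzz : 0 < (z₁ - z₂) ^ 2 := by
      rw [← sq_abs]; exact pow_pos (abs_pos.mpr hd) 2
    have hid : 4 * ((ρ₁ * ρ₂ - ρ₁ - 1) ^ 2 - ρ₂ * (ρ₂ - 2) * ρ₁ ^ 2)
        = (ρ₂ * (ρ₂ - 2)) ^ 2 * (z₁ - z₂) ^ 2 := by
      linear_combination (2 * (ρ₁ * ρ₂ - ρ₁ - 1) - ρ₂ * (ρ₂ - 2) * (z₁ + z₂)) * hsum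
        - 4 * (ρ₂ * (ρ₂ - 2)) * hprod
    have hdisc : ρ₂ * (ρ₂ - 2) * ρ₁ ^ 2 < (ρ₁ * ρ₂ - ρ₁ - 1) ^ 2 := by
      nlinarith [hid, mul_pos (mul_pos ha ha) hzz]
    have key : s ^ 2 < (ρ₂ - 1 - ρ₁) ^ 2 := by nlinarith
    have : s < ρ₂ - 1 - ρ₁ := by nlinarith [sq_nonneg (s - (ρ₂ - 1 - ρ₁))]
    linarith
  · intro h
    have hd : 0 < (ρ₂ - 1 - ρ₁) ^ 2 - s ^ 2 := by nlinarith
    set r : ℝ := Real.sqrt ((ρ₂ - 1 - ρ₁) ^ 2 - s ^ 2) with hrdef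
    have hr0 : 0 < r := Real.sqrt_pos.mpr hd
    have hr2 : r ^ 2 = (ρ₂ - 1 - ρ₁) ^ 2 - s ^ 2 := Real.sq_sqrt hd.le
    clear_value r
    have hsle : s ≤ ρ₂ - 1 := by nlinarith [hs2, hs0]
    have hb : ρ₁ * ρ₂ - ρ₁ - 1 < 0 := by
      nlinarith [hs2, mul_nonneg hs0 (sub_nonneg.mpr hsle),
        mul_lt_mul_of_pos_right h (show (0:ℝ) < ρ₂ - 1 by linarith)]
    have hrb : r ^ 2 = (ρ₁ * ρ₂ - ρ₁ - 1) ^ 2 - ρ₂ * (ρ₂ - 2) * ρ₁ ^ 2 := by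
      linear_combination hr2 - hs2
    have hbr : r < -(ρ₁ * ρ₂ - ρ₁ - 1) := by
      have h1 : r ^ 2 < (-(ρ₁ * ρ₂ - ρ₁ - 1)) ^ 2 := by
        have := mul_pos ha (pow_pos hρ₁ 2)
        nlinarith [hrb]
      exact lt_of_pow_lt_pow_left₀ 2 (by linarith) h1
    have hane : ρ₂ * (ρ₂ - 2) ≠ 0 := ha.ne'
    have hroot : ∀ t : ℝ, t ^ 2 = r ^ 2 →
        P ((-(ρ₁ * ρ₂ - ρ₁ - 1) + t) / (ρ₂ * (ρ₂ - 2))) = 0 := by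
      intro t ht
      have key : ρ₂ * (ρ₂ - 2) * ((-(ρ₁ * ρ₂ - ρ₁ - 1) + t) / (ρ₂ * (ρ₂ - 2))) ^ 2
          + 2 * (ρ₁ * ρ₂ - ρ₁ - 1) * ((-(ρ₁ * ρ₂ - ρ₁ - 1) + t) / (ρ₂ * (ρ₂ - 2))) + ρ₁ ^ 2
          = (t ^ 2 - ((ρ₁ * ρ₂ - ρ₁ - 1) ^ 2 - ρ₂ * (ρ₂ - 2) * ρ₁ ^ 2)) / (ρ₂ * (ρ₂ - 2)) := by
        have h2' : ρ₂ - 2 ≠ 0 := (sub_pos.mpr h2).ne'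
        have h0' : ρ₂ ≠ 0 := (by linarith : (0:ℝ) < ρ₂).ne'
        field_simp
        ring
      rw [hP, key, ht, hrb, sub_self, zero_div]
    refine ⟨(-(ρ₁ * ρ₂ - ρ₁ - 1) + r) / (ρ₂ * (ρ₂ - 2)),
           (-(ρ₁ * ρ₂ - ρ₁ - 1) + -r) / (ρ₂ * (ρ₂ - 2)), ?_, ?_, ?_, ?_, ?_⟩
    · exact div_pos (by linarith) ha
    · exact div_pos (by linarith) ha
    · intro hcon
      rw [div_eq_div_iff hane hane] at hcon
      have : r = -r := by
        have := mul_right_cancel₀ hane hcon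
        linarith
      linarith
    · exact hroot r rfl
    · exact hroot (-r) (by ring)
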